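/- Let n ≥ 1 and let μ be a probability measure on [0,1] with μ((0,1)) > 0. Let B be a standard Brownian motion and define the local means G'_i = ∫₀¹ B_{(s+i)/n} dμ(s) for i = 0, …, n−1. Then the covariance matrix (E[G'_i G'_j])_{0≤i,j≤n−1}, whose entries are E[G'_i G'_j] = (1/n) ∫₀¹ ∫₀¹ min(s+i, t+j) dμ(s) dμ(t), is positive definite; in particular it is invertible. -/

import Mathlib

open MeasureTheory ProbabilityTheory

open Real Set
open scoped NNReal ENNReal

set_option maxHeartbeats 1000000


private lemma aux_integrable_sq_exp {b : ℝ} (hb : 0 < b) :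
    Integrable (fun x : ℝ => x ^ 2 * Real.exp (-b * x ^ 2)) := by
  have := integrable_rpow_mul_exp_neg_mul_sq hb (s := 2) (by norm_num)
  have h2 : ∀ x : ℝ, x ^ (2 : ℝ) = x ^ (2 : ℕ) := fun x => by
    rw [show (2:ℝ) = ((2:ℕ):ℝ) by norm_num, Real.rpow_natCast]
  simpa [h2] using this

private lemma aux_integral_sq_exp {b : ℝ} (hb : 0 < b) :
    ∫ x : ℝ, x ^ 2 * Real.exp (-b * x ^ 2) = Real.sqrt (Real.pi / b) / (2 * b) := by
  have hd : ∀ x : ℝ, HasDerivAt (fun y : ℝ => y * Real.exp (-b * y ^ 2))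
      (Real.exp (-b * x ^ 2) - 2 * b * (x ^ 2 * Real.exp (-b * x ^ 2))) x := by
    intro x
    have h1 : HasDerivAt (fun y : ℝ => -b * y ^ 2) (-b * (2 * x ^ 1)) x :=
      (hasDerivAt_pow 2 x).const_mul (-b)
    have h2 := h1.exp
    have h3 : HasDerivAt (fun y : ℝ => y * Real.exp (-b * y ^ 2)) _ x := (hasDerivAt_id x).mul h2
    convert h3 using 1
    simp only [id_eq, pow_one]
    ring
  have hf' : Integrable (fun x : ℝ =>
      Real.exp (-b * x ^ 2) - 2 * b * (x ^ 2 * Real.exp (-b * x ^ 2))) :=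
    (integrable_exp_neg_mul_sq hb).sub ((aux_integrable_sq_exp hb).const_mul (2 * b))
  have h0 := integral_eq_zero_of_hasDerivAt_of_integrable hd hf'
    (integrable_mul_exp_neg_mul_sq hb)
  rw [integral_sub (integrable_exp_neg_mul_sq hb)
    ((aux_integrable_sq_exp hb).const_mul (2 * b)), integral_const_mul,
    integral_gaussian] at h0
  have hb' : (2 : ℝ) * b ≠ 0 := by positivity
  rw [eq_div_iff hb']
  linarith

private lemma aux_gauss_sq (v : ℝ≥0) :
    Integrable (fun x : ℝ => x ^ 2) (gaussianReal 0 v) ∧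
      ∫ x, x ^ 2 ∂(gaussianReal 0 v) = v := by
  rcases eq_or_ne v 0 with hv | hv
  · subst hv
    rw [gaussianReal_zero_var]
    constructor
    · refine ⟨stronglyMeasurable_id.pow _ |>.aestronglyMeasurable, ?_⟩
      rw [HasFiniteIntegral, lintegral_dirac]
      simp
    · rw [integral_dirac]
      simp
  · set b : ℝ := (2 * (v : ℝ))⁻¹ with hbdef
    have hv' : (0 : ℝ) < v := by positivity
    have hb : 0 < b := by positivity
    have hpdf : ∀ x : ℝ, gaussianPDFReal 0 v x
        = (Real.sqrt (2 * Real.pi * v))⁻¹ * Real.exp (-b * x ^ 2) := by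
      intro x
      rw [gaussianPDFReal, hbdef]
      congr 1
      congr 1
      rw [sub_zero]
      field_simp
    set φ : ℝ → ℝ≥0 := fun x => Real.toNNReal (gaussianPDFReal 0 v x) with hφdef
    have hφmeas : Measurable φ := (measurable_gaussianPDFReal 0 v).real_toNNReal
    have hgr : gaussianReal 0 v = volume.withDensity (fun x => (φ x : ℝ≥0∞)) := by
      rw [gaussianReal_of_var_ne_zero 0 hv]
      congr 1
    have hsmul : ∀ x : ℝ, φ x • (x ^ 2) =
        (Real.sqrt (2 * Real.pi * v))⁻¹ * (x ^ 2 * Real.exp (-b * x ^ 2)) := by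
      intro x
      rw [NNReal.smul_def, smul_eq_mul, Real.coe_toNNReal _ (gaussianPDFReal_nonneg 0 v x),
        hpdf x]
      ring
    have hint : Integrable (fun x : ℝ =>
        (Real.sqrt (2 * Real.pi * v))⁻¹ * (x ^ 2 * Real.exp (-b * x ^ 2))) :=
      (aux_integrable_sq_exp hb).const_mul _
    constructor
    · rw [hgr, integrable_withDensity_iff_integrable_smul hφmeas]
      exact hint.congr (Filter.Eventually.of_forall fun x => (hsmul x).symm)
    · rw [hgr, integral_withDensity_eq_integral_smul hφmeas]
      calc ∫ x : ℝ, φ x • (x ^ 2)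
          = ∫ x : ℝ, (Real.sqrt (2 * Real.pi * v))⁻¹ * (x ^ 2 * Real.exp (-b * x ^ 2)) :=
            by exact integral_congr_ae (Filter.Eventually.of_forall hsmul)
        _ = (Real.sqrt (2 * Real.pi * v))⁻¹ * (Real.sqrt (Real.pi / b) / (2 * b)) := by
            rw [integral_const_mul, aux_integral_sq_exp hb]
        _ = (v : ℝ) := by
            have h1 : Real.pi / b = 2 * Real.pi * v := by
              rw [hbdef]; field_simp
            have h2 : Real.sqrt (2 * Real.pi * v) ≠ 0 := by
              refine Real.sqrt_ne_zero'.mpr ?_; positivity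
            rw [h1]
            rw [hbdef]
            field_simp

private lemma aux_moment {Ω : Type*} [MeasurableSpace Ω] (P : Measure Ω) {X : Ω → ℝ}
    (hX : Measurable X) {v : ℝ≥0} (h : Measure.map X P = gaussianReal 0 v) :
    Integrable (fun ω => X ω ^ 2) P ∧ ∫ ω, X ω ^ 2 ∂P = v := by
  have hg : AEStronglyMeasurable (fun x : ℝ => x ^ 2) (Measure.map X P) :=
    (stronglyMeasurable_id.pow _).aestronglyMeasurable
  constructor
  · have := (integrable_map_measure hg hX.aemeasurable).mp
      (by rw [h]; exact (aux_gauss_sq v).1)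
    exact this
  · rw [← integral_map hX.aemeasurable hg, h]
    exact (aux_gauss_sq v).2

/-- `B` is a standard one-dimensional Brownian motion under `P`: it has continuous paths,
starts at `0`, each `B t` is measurable, and its finite-dimensional distributions are
centered Gaussian with covariance `E[B_s B_t] = min s t`. -/
def IsBrownianMotion {Ω : Type*} [MeasurableSpace Ω] (P : Measure Ω) (W : ℝ → Ω → ℝ) : Prop :=
  (∀ ω, Continuous fun t => W t ω) ∧ (∀ ω, W 0 ω = 0) ∧ (∀ t, Measurable (W t)) ∧
  ∀ (n : ℕ) (t : Fin n → ℝ), (∀ i, 0 ≤ t i) → ∀ c : Fin n → ℝ,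
    Measure.map (fun ω => ∑ i, c i * W (t i) ω) P =
      gaussianReal 0 (Real.toNNReal (∑ i, ∑ j, c i * c j * min (t i) (t j)))

/-- for `n ≥ 1`, a probability measure `μ` on `[0,1]` with `μ((0,1)) > 0`, a
standard Brownian motion `B` and the local means `G'_i = ∫₀¹ B_{(s+i)/n} dμ(s)`,
`i = 0, …, n−1`, the covariance matrix `(E[G'_i G'_j])_{i,j}`, whose entries equal
`(1/n) ∫₀¹ ∫₀¹ min(s+i, t+j) dμ(s) dμ(t)`, is positive definite, hence invertible. -/
theorem covariance_matrix_of_local_means_posDef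
    {Ω : Type*} [MeasurableSpace Ω] (P : Measure Ω) [IsProbabilityMeasure P]
    (n : ℕ) (hn : 1 ≤ n)
    (μ : Measure ℝ) [IsProbabilityMeasure μ] (hμsupp : μ (Set.Icc (0 : ℝ) 1)ᶜ = 0)
    (hμ : 0 < μ (Set.Ioo (0 : ℝ) 1))
    (B : ℝ → Ω → ℝ) (hB : IsBrownianMotion P B)
    (G' : Fin n → Ω → ℝ)
    (hG' : ∀ (i : Fin n) ω, G' i ω = ∫ s, B ((s + (i : ℕ)) / n) ω ∂μ)
    (Cov : Matrix (Fin n) (Fin n) ℝ)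
    (hCov : ∀ i j, Cov i j = ∫ ω, G' i ω * G' j ω ∂P) :
    (∀ i j : Fin n, Cov i j
        = (1 / n) * ∫ t, (∫ s, min (s + (i : ℕ)) (t + (j : ℕ)) ∂μ) ∂μ) ∧
    Cov.PosDef ∧ IsUnit Cov.det := by
  obtain ⟨hcont, -, hBmeas, hfdd⟩ := hB
  have hn0 : (0:ℝ) < n := by exact_mod_cast hn
  -- single time marginal
  have hmap1 : ∀ a : ℝ, 0 ≤ a → Measure.map (B a) P = gaussianReal 0 (Real.toNNReal a) := by
    intro a ha
    have := hfdd 1 (fun _ => a) (fun _ => ha) (fun _ => 1)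
    simpa [min_self] using this
  have hsq : ∀ a : ℝ, 0 ≤ a →
      Integrable (fun ω => B a ω ^ 2) P ∧ ∫ ω, B a ω ^ 2 ∂P = a := by
    intro a ha
    obtain ⟨h1, h2⟩ := aux_moment P (hBmeas a) (hmap1 a ha)
    exact ⟨h1, by rw [h2, Real.coe_toNNReal a ha]⟩
  have hmap2 : ∀ a b : ℝ, 0 ≤ a → 0 ≤ b → Measure.map (fun ω => B a ω + B b ω) P
      = gaussianReal 0 (Real.toNNReal (a + b + 2 * min a b)) := by
    intro a b ha hb
    have h := hfdd 2 ![a, b] (by intro i; fin_cases i <;> simpa) (fun _ => 1)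
    have hfun : (fun ω => ∑ i : Fin 2, (1:ℝ) * B (![a, b] i) ω)
        = fun ω => B a ω + B b ω := by
      funext ω; simp [Fin.sum_univ_two]
    have hvar : (∑ i : Fin 2, ∑ j : Fin 2, (1:ℝ) * 1 * min (![a, b] i) (![a, b] j))
        = a + b + 2 * min a b := by
      simp [Fin.sum_univ_two, min_self]
      rw [min_comm b a]; ring
    rw [hfun, hvar] at h
    exact h
  have hpairsq : ∀ a b : ℝ, 0 ≤ a → 0 ≤ b →
      Integrable (fun ω => (B a ω + B b ω) ^ 2) P ∧
        ∫ ω, (B a ω + B b ω) ^ 2 ∂P = a + b + 2 * min a b := by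
    intro a b ha hb
    have hm : (0:ℝ) ≤ min a b := le_min ha hb
    obtain ⟨h1, h2⟩ := aux_moment P ((hBmeas a).add (hBmeas b)) (hmap2 a b ha hb)
    exact ⟨h1, by simp only [Pi.add_apply] at h2; rw [h2, Real.coe_toNNReal _ (by linarith)]⟩
  have hmul : ∀ a b : ℝ, 0 ≤ a → 0 ≤ b →
      Integrable (fun ω => B a ω * B b ω) P ∧ ∫ ω, B a ω * B b ω ∂P = min a b := by
    intro a b ha hb
    obtain ⟨ia, ea⟩ := hsq a ha
    obtain ⟨ib, eb⟩ := hsq b hb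
    obtain ⟨iab, eab⟩ := hpairsq a b ha hb
    have hid : (fun ω => B a ω * B b ω)
        = fun ω => ((B a ω + B b ω) ^ 2 - B a ω ^ 2 - B b ω ^ 2) / 2 := by
      funext ω; ring
    have hint : Integrable
        (fun ω => ((B a ω + B b ω) ^ 2 - B a ω ^ 2 - B b ω ^ 2) / 2) P :=
      ((iab.sub ia).sub ib).div_const 2
    refine ⟨hid ▸ hint, ?_⟩
    have i1 : Integrable (fun ω => (B a ω + B b ω) ^ 2 - B a ω ^ 2) P := iab.sub ia
    rw [hid, integral_div, integral_sub i1 ib, integral_sub iab ia, ea, eb, eab]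
    ring
  -- joint measurability
  have hjm : Measurable (Function.uncurry B) :=
    measurable_uncurry_of_continuous_of_measurable hcont hBmeas
  -- a.e. support facts
  have hae1 : ∀ᵐ s ∂μ, s ∈ Icc (0:ℝ) 1 := by
    rw [ae_iff]
    exact hμsupp
  have haep : ∀ᵐ p ∂(μ.prod μ), p.1 ∈ Icc (0:ℝ) 1 ∧ p.2 ∈ Icc (0:ℝ) 1 := by
    have h0 : (μ.prod μ) ((Icc (0:ℝ) 1 ×ˢ Icc (0:ℝ) 1)ᶜ) = 0 := by
      rw [Set.compl_prod_eq_union]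
      refine le_antisymm (le_trans (measure_union_le _ _) ?_) zero_le
      rw [Measure.prod_prod, Measure.prod_prod, hμsupp]
      simp
    rw [ae_iff]
    convert h0 using 2
    rfl
  -- integrability of the big product function
  have hKmeas : ∀ ci cj : ℝ, Measurable (fun q : Ω × (ℝ × ℝ) =>
      B ((q.2.1 + ci) / n) q.1 * B ((q.2.2 + cj) / n) q.1) := by
    intro ci cj
    have h1 : Measurable (fun q : Ω × (ℝ × ℝ) => B ((q.2.1 + ci) / n) q.1) := by
      have : (fun q : Ω × (ℝ × ℝ) => B ((q.2.1 + ci) / n) q.1)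
          = (Function.uncurry B) ∘ (fun q : Ω × (ℝ × ℝ) => ((q.2.1 + ci) / n, q.1)) := rfl
      rw [this]
      exact hjm.comp ((((measurable_snd.fst).add_const ci).div_const _).prodMk measurable_fst)
    have h2 : Measurable (fun q : Ω × (ℝ × ℝ) => B ((q.2.2 + cj) / n) q.1) := by
      have : (fun q : Ω × (ℝ × ℝ) => B ((q.2.2 + cj) / n) q.1)
          = (Function.uncurry B) ∘ (fun q : Ω × (ℝ × ℝ) => ((q.2.2 + cj) / n, q.1)) := rfl
      rw [this]
      exact hjm.comp ((((measurable_snd.snd).add_const cj).div_const _).prodMk measurable_fst)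
    exact h1.mul h2
  have habs : ∀ x y : ℝ, |x| * |y| ≤ (x ^ 2 + y ^ 2) / 2 := by
    intro x y
    nlinarith [sq_nonneg (|x| - |y|), sq_abs x, sq_abs y, abs_nonneg x, abs_nonneg y]
  have hKint : ∀ ci cj : ℝ, 0 ≤ ci → 0 ≤ cj →
      Integrable (fun q : Ω × (ℝ × ℝ) =>
        B ((q.2.1 + ci) / n) q.1 * B ((q.2.2 + cj) / n) q.1) (P.prod (μ.prod μ)) := by
    intro ci cj hci hcj
    rw [integrable_prod_iff' (hKmeas ci cj).aestronglyMeasurable]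
    constructor
    · filter_upwards [haep] with p hp
      exact (hmul _ _ (div_nonneg (by linarith [hp.1.1]) hn0.le)
        (div_nonneg (by linarith [hp.2.1]) hn0.le)).1
    · have hsm : StronglyMeasurable (fun p : ℝ × ℝ =>
          ∫ ω, ‖B ((p.1 + ci) / n) ω * B ((p.2 + cj) / n) ω‖ ∂P) := by
        apply MeasureTheory.StronglyMeasurable.integral_prod_left
          (f := fun (ω : Ω) (p : ℝ × ℝ) => ‖B ((p.1 + ci) / n) ω * B ((p.2 + cj) / n) ω‖)
        exact ((hKmeas ci cj).norm).stronglyMeasurable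
      refine Integrable.mono' (integrable_const (((1 + ci) / n + (1 + cj) / n) / 2))
        hsm.aestronglyMeasurable ?_
      filter_upwards [haep] with p hp
      have ha : (0:ℝ) ≤ (p.1 + ci) / n := div_nonneg (by linarith [hp.1.1]) hn0.le
      have hb : (0:ℝ) ≤ (p.2 + cj) / n := div_nonneg (by linarith [hp.2.1]) hn0.le
      obtain ⟨imul, -⟩ := hmul _ _ ha hb
      obtain ⟨ia, ea⟩ := hsq _ ha
      obtain ⟨ib, eb⟩ := hsq _ hb
      have hle : ∫ ω, ‖B ((p.1 + ci) / n) ω * B ((p.2 + cj) / n) ω‖ ∂P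
          ≤ ((p.1 + ci) / n + (p.2 + cj) / n) / 2 := by
        have hmono : ∫ ω, ‖B ((p.1 + ci) / n) ω * B ((p.2 + cj) / n) ω‖ ∂P
            ≤ ∫ ω, (B ((p.1 + ci) / n) ω ^ 2 + B ((p.2 + cj) / n) ω ^ 2) / 2 ∂P := by
          refine integral_mono imul.norm ((ia.add ib).div_const 2) ?_
          intro ω
          simpa [Real.norm_eq_abs, abs_mul] using habs (B ((p.1 + ci) / n) ω) (B ((p.2 + cj) / n) ω)
        rw [integral_div, integral_add ia ib, ea, eb] at hmono
        exact hmono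
      have hnn : 0 ≤ ∫ ω, ‖B ((p.1 + ci) / n) ω * B ((p.2 + cj) / n) ω‖ ∂P :=
        integral_nonneg fun ω => norm_nonneg _
      rw [Real.norm_eq_abs, abs_of_nonneg hnn]
      refine hle.trans ?_
      have h1 : (p.1 + ci) / n ≤ (1 + ci) / n :=
        div_le_div_of_nonneg_right (by linarith [hp.1.2]) hn0.le
      have h2 : (p.2 + cj) / n ≤ (1 + cj) / n :=
        div_le_div_of_nonneg_right (by linarith [hp.2.2]) hn0.le
      linarith
  -- covariance as an integral over the product measure
  have hCovProd : ∀ i j : Fin n, Cov i j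
      = ∫ p : ℝ × ℝ, min ((p.1 + (i:ℕ)) / n) ((p.2 + (j:ℕ)) / n) ∂(μ.prod μ) := by
    intro i j
    have hci : (0:ℝ) ≤ (i:ℕ) := Nat.cast_nonneg _
    have hcj : (0:ℝ) ≤ (j:ℕ) := Nat.cast_nonneg _
    rw [hCov i j]
    have h1 : ∀ ω, G' i ω * G' j ω
        = ∫ p : ℝ × ℝ, B ((p.1 + (i:ℕ)) / n) ω * B ((p.2 + (j:ℕ)) / n) ω ∂(μ.prod μ) := by
      intro ω
      rw [hG' i ω, hG' j ω, ← integral_prod_mul]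
    calc ∫ ω, G' i ω * G' j ω ∂P
        = ∫ ω, ∫ p : ℝ × ℝ, B ((p.1 + (i:ℕ)) / n) ω * B ((p.2 + (j:ℕ)) / n) ω ∂(μ.prod μ) ∂P :=
          integral_congr_ae (Filter.Eventually.of_forall h1)
      _ = ∫ p : ℝ × ℝ, ∫ ω, B ((p.1 + (i:ℕ)) / n) ω * B ((p.2 + (j:ℕ)) / n) ω ∂P ∂(μ.prod μ) :=
          integral_integral_swap (hKint _ _ hci hcj)
      _ = ∫ p : ℝ × ℝ, min ((p.1 + (i:ℕ)) / n) ((p.2 + (j:ℕ)) / n) ∂(μ.prod μ) := by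
          refine integral_congr_ae ?_
          filter_upwards [haep] with p hp
          exact (hmul _ _ (div_nonneg (by linarith [hp.1.1]) hn0.le)
            (div_nonneg (by linarith [hp.2.1]) hn0.le)).2
  have hCovProd2 : ∀ i j : Fin n, Cov i j
      = (1 / (n:ℝ)) * ∫ p : ℝ × ℝ, min (p.1 + (i:ℕ)) (p.2 + (j:ℕ)) ∂(μ.prod μ) := by
    intro i j
    rw [hCovProd i j, ← integral_const_mul]
    refine integral_congr_ae (Filter.Eventually.of_forall fun p => ?_)
    show min ((p.1 + ((i:ℕ):ℝ)) / n) ((p.2 + ((j:ℕ):ℝ)) / n)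
      = 1 / (n:ℝ) * min (p.1 + ((i:ℕ):ℝ)) (p.2 + ((j:ℕ):ℝ))
    rw [min_div_div_right hn0.le]
    ring
  have hMint : ∀ i j : Fin n,
      Integrable (fun p : ℝ × ℝ => min (p.1 + ((i:ℕ):ℝ)) (p.2 + ((j:ℕ):ℝ))) (μ.prod μ) := by
    intro i j
    refine Integrable.mono' (integrable_const (n:ℝ)) ?_ ?_
    · exact ((measurable_fst.add_const _).min (measurable_snd.add_const _)).aestronglyMeasurable
    · filter_upwards [haep] with p hp
      have hi1 : ((i:ℕ):ℝ) + 1 ≤ n := by exact_mod_cast i.isLt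
      have hmn : min (p.1 + ((i:ℕ):ℝ)) (p.2 + ((j:ℕ):ℝ)) ≤ n :=
        le_trans (min_le_left _ _) (by linarith [hp.1.2])
      have hm0 : (0:ℝ) ≤ min (p.1 + ((i:ℕ):ℝ)) (p.2 + ((j:ℕ):ℝ)) :=
        le_min (by linarith [hp.1.1, (Nat.cast_nonneg (i:ℕ) : (0:ℝ) ≤ (i:ℕ))])
          (by linarith [hp.2.1, (Nat.cast_nonneg (j:ℕ) : (0:ℝ) ≤ (j:ℕ))])
      rw [Real.norm_eq_abs, abs_of_nonneg hm0]
      exact hmn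
  have hfirst : ∀ i j : Fin n, Cov i j
      = (1 / (n:ℝ)) * ∫ t, (∫ s, min (s + (i:ℕ)) (t + (j:ℕ)) ∂μ) ∂μ := by
    intro i j
    rw [hCovProd2 i j]
    congr 1
    have hswap := integral_integral_swap
      (f := fun s t => min (s + ((i:ℕ):ℝ)) (t + ((j:ℕ):ℝ))) (μ := μ) (ν := μ) (hMint i j)
    rw [integral_prod _ (hMint i j)]
    exact hswap
  -- the survival function of μ
  set F : ℝ → ℝ := fun u => (μ (Ici u)).toReal with hFdef
  have hFanti : Antitone F := fun a b hab =>
    ENNReal.toReal_mono (measure_ne_top μ _) (measure_mono (Ici_subset_Ici.mpr hab))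
  have hFmeas : Measurable F := hFanti.measurable
  have hFnonneg : ∀ u, 0 ≤ F u := fun u => ENNReal.toReal_nonneg
  have hFle1 : ∀ u, F u ≤ 1 := by
    intro u
    have h1 : μ (Ici u) ≤ 1 := prob_le_one
    calc F u ≤ (1:ℝ≥0∞).toReal := ENNReal.toReal_mono (by norm_num) h1
      _ = 1 := by simp
  have hFzero : ∀ w : ℝ, 1 < w → F w = 0 := by
    intro w hw
    have hsub : Ici w ⊆ (Icc (0:ℝ) 1)ᶜ := by
      intro s hs
      simp only [mem_compl_iff, mem_Icc, not_and, not_le]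
      intro _
      exact lt_of_lt_of_le hw hs
    have h0 : μ (Ici w) = 0 := measure_mono_null hsub hμsupp
    simp [hFdef, h0]
  haveI hfinres : IsFiniteMeasure (volume.restrict (Ioc (0:ℝ) (n:ℝ))) := by
    constructor
    rw [Measure.restrict_apply_univ, Real.volume_Ioc]
    exact ENNReal.ofReal_lt_top
  -- Fubini : product-measure integral of min equals an integral of F * F
  have hD2 : ∀ i j : Fin n,
      ∫ p : ℝ × ℝ, min (p.1 + ((i:ℕ):ℝ)) (p.2 + ((j:ℕ):ℝ)) ∂(μ.prod μ)
        = ∫ u in Ioc (0:ℝ) (n:ℝ), F (u - (i:ℕ)) * F (u - (j:ℕ)) := by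
    intro i j
    set ci : ℝ := ((i:ℕ):ℝ) with hcidef
    set cj : ℝ := ((j:ℕ):ℝ) with hcjdef
    have hci : (0:ℝ) ≤ ci := Nat.cast_nonneg _
    have hcj : (0:ℝ) ≤ cj := Nat.cast_nonneg _
    have hi1 : ci + 1 ≤ (n:ℝ) := by rw [hcidef]; exact_mod_cast i.isLt
    set ρ : Measure ℝ := volume.restrict (Ioc (0:ℝ) (n:ℝ)) with hρdef
    have hmeasH : Measurable (Function.uncurry (fun (u:ℝ) (p:ℝ×ℝ) =>
        (if u ≤ p.1 + ci then (1:ℝ) else 0) * (if u ≤ p.2 + cj then (1:ℝ) else 0))) := by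
      apply Measurable.mul
      · exact Measurable.ite (measurableSet_le measurable_fst
          (measurable_snd.fst.add_const ci)) measurable_const measurable_const
      · exact Measurable.ite (measurableSet_le measurable_fst
          (measurable_snd.snd.add_const cj)) measurable_const measurable_const
    have hintH : Integrable (Function.uncurry (fun (u:ℝ) (p:ℝ×ℝ) =>
        (if u ≤ p.1 + ci then (1:ℝ) else 0) * (if u ≤ p.2 + cj then (1:ℝ) else 0)))
        (ρ.prod (μ.prod μ)) := by
      refine Integrable.mono' (integrable_const 1) hmeasH.aestronglyMeasurable ?_
      refine Filter.Eventually.of_forall fun q => ?_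
      simp only [Function.uncurry, Real.norm_eq_abs]
      split_ifs <;> norm_num
    have hswap := integral_integral_swap (f := fun (u:ℝ) (p:ℝ×ℝ) =>
        (if u ≤ p.1 + ci then (1:ℝ) else 0) * (if u ≤ p.2 + cj then (1:ℝ) else 0)) hintH
    have hleft : ∀ u : ℝ, (∫ p : ℝ×ℝ,
        (if u ≤ p.1 + ci then (1:ℝ) else 0) * (if u ≤ p.2 + cj then (1:ℝ) else 0) ∂(μ.prod μ))
          = F (u - ci) * F (u - cj) := by
      intro u
      rw [integral_prod_mul (f := fun s => if u ≤ s + ci then (1:ℝ) else 0)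
        (g := fun t => if u ≤ t + cj then (1:ℝ) else 0)]
      have e1 : ∀ c : ℝ, (fun s => if u ≤ s + c then (1:ℝ) else 0)
          = Set.indicator (Ici (u - c)) (fun _ => (1:ℝ)) := by
        intro c; funext s
        simp [Set.indicator_apply, mem_Ici, sub_le_iff_le_add]
      rw [e1 ci, e1 cj, integral_indicator_const (1:ℝ) measurableSet_Ici,
        integral_indicator_const (1:ℝ) measurableSet_Ici]
      simp [hFdef]
      rfl
    have hright : ∀ᵐ p ∂(μ.prod μ), (∫ u,
        (if u ≤ p.1 + ci then (1:ℝ) else 0) * (if u ≤ p.2 + cj then (1:ℝ) else 0) ∂ρ)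
          = min (p.1 + ci) (p.2 + cj) := by
      filter_upwards [haep] with p hp
      have hm0 : (0:ℝ) ≤ min (p.1 + ci) (p.2 + cj) :=
        le_min (by linarith [hp.1.1]) (by linarith [hp.2.1])
      have hmn : min (p.1 + ci) (p.2 + cj) ≤ (n:ℝ) :=
        le_trans (min_le_left _ _) (by linarith [hp.1.2])
      have hfun : (fun u : ℝ =>
          (if u ≤ p.1 + ci then (1:ℝ) else 0) * (if u ≤ p.2 + cj then (1:ℝ) else 0))
          = Set.indicator (Iic (min (p.1 + ci) (p.2 + cj))) (fun _ => (1:ℝ)) := by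
        funext u
        by_cases h1 : u ≤ p.1 + ci <;> by_cases h2 : u ≤ p.2 + cj <;>
          simp [Set.indicator_apply, mem_Iic, le_min_iff, h1, h2]
      rw [hfun, integral_indicator_const (1:ℝ) measurableSet_Iic, smul_eq_mul, mul_one,
        Measure.real, hρdef, Measure.restrict_apply measurableSet_Iic]
      have hset : Iic (min (p.1 + ci) (p.2 + cj)) ∩ Ioc (0:ℝ) (n:ℝ)
          = Ioc 0 (min (p.1 + ci) (p.2 + cj)) := by
        rw [Set.inter_comm, Set.Ioc_inter_Iic, min_comm (n:ℝ) _, min_eq_left hmn]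
      rw [hset, Real.volume_Ioc, sub_zero, ENNReal.toReal_ofReal hm0]
    calc ∫ p : ℝ×ℝ, min (p.1 + ci) (p.2 + cj) ∂(μ.prod μ)
        = ∫ p : ℝ×ℝ, (∫ u,
            (if u ≤ p.1 + ci then (1:ℝ) else 0) * (if u ≤ p.2 + cj then (1:ℝ) else 0) ∂ρ)
              ∂(μ.prod μ) := (integral_congr_ae hright).symm
      _ = ∫ u, (∫ p : ℝ×ℝ,
            (if u ≤ p.1 + ci then (1:ℝ) else 0) * (if u ≤ p.2 + cj then (1:ℝ) else 0)
              ∂(μ.prod μ)) ∂ρ := hswap.symm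
      _ = ∫ u, F (u - ci) * F (u - cj) ∂ρ :=
            integral_congr_ae (Filter.Eventually.of_forall hleft)
  have hkey : ∀ i j : Fin n, Cov i j
      = (1/(n:ℝ)) * ∫ u in Ioc (0:ℝ) (n:ℝ), F (u - (i:ℕ)) * F (u - (j:ℕ)) := by
    intro i j
    rw [hCovProd2 i j, hD2 i j]
  have hFFint : ∀ ci cj : ℝ,
      IntegrableOn (fun u => F (u - ci) * F (u - cj)) (Ioc (0:ℝ) (n:ℝ)) volume := by
    intro ci cj
    refine Integrable.mono' (integrable_const 1)
      (((hFmeas.comp (measurable_id.sub measurable_const)).mul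
        (hFmeas.comp (measurable_id.sub measurable_const))).aestronglyMeasurable)
      (Filter.Eventually.of_forall fun u => ?_)
    rw [Real.norm_eq_abs, abs_of_nonneg (mul_nonneg (hFnonneg _) (hFnonneg _))]
    exact mul_le_one₀ (hFle1 _) (hFnonneg _) (hFle1 _)
  have hherm : Cov.IsHermitian := by
    have hsymm : ∀ i j : Fin n, Cov j i = Cov i j := by
      intro i j
      rw [hkey i j, hkey j i]
      congr 1
      exact integral_congr_ae (Filter.Eventually.of_forall fun u => mul_comm _ _)
    ext i j
    rw [Matrix.conjTranspose_apply, star_trivial]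
    exact hsymm i j
  -- quadratic form positivity
  have hPD : Cov.PosDef := by
    refine Matrix.PosDef.of_dotProduct_mulVec_pos hherm fun x hx => ?_
    have hstarx : star x = x := funext fun i => star_trivial _
    rw [hstarx]
    have hdot : dotProduct x (Cov.mulVec x) = ∑ i, x i * ∑ j, Cov i j * x j := by
      simp [dotProduct, Matrix.mulVec]
    have hgint : ∀ i j : Fin n, IntegrableOn
        (fun u => (x i * F (u - (i:ℕ))) * (x j * F (u - (j:ℕ)))) (Ioc (0:ℝ) (n:ℝ)) volume := by
      intro i j
      refine Integrable.congr ((hFFint ((i:ℕ):ℝ) ((j:ℕ):ℝ)).const_mul (x i * x j)) ?_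
      exact Filter.Eventually.of_forall fun u => by ring
    have hterm : ∀ i j : Fin n, x i * (Cov i j * x j)
        = (1/(n:ℝ)) * ∫ u in Ioc (0:ℝ) (n:ℝ),
            (x i * F (u - (i:ℕ))) * (x j * F (u - (j:ℕ))) := by
      intro i j
      rw [hkey i j]
      have h2 : ∫ u in Ioc (0:ℝ) (n:ℝ), (x i * F (u - (i:ℕ))) * (x j * F (u - (j:ℕ)))
          = (x i * x j) * ∫ u in Ioc (0:ℝ) (n:ℝ), F (u - (i:ℕ)) * F (u - (j:ℕ)) := by
        rw [← integral_const_mul]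
        refine integral_congr_ae (Filter.Eventually.of_forall fun u => ?_)
        show (x i * F (u - (i:ℕ))) * (x j * F (u - (j:ℕ)))
          = x i * x j * (F (u - (i:ℕ)) * F (u - (j:ℕ)))
        ring
      rw [h2]
      ring
    set G : ℝ → ℝ := fun u => ∑ i : Fin n, x i * F (u - (i:ℕ)) with hGdef
    have hGsq : ∀ u, G u ^ 2
        = ∑ i : Fin n, ∑ j : Fin n, (x i * F (u - (i:ℕ))) * (x j * F (u - (j:ℕ))) := by
      intro u
      simp only [hGdef]
      rw [pow_two, Finset.sum_mul_sum]
    have hQ : dotProduct x (Cov.mulVec x)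
        = (1/(n:ℝ)) * ∫ u in Ioc (0:ℝ) (n:ℝ), G u ^ 2 := by
      rw [hdot]
      calc ∑ i, x i * ∑ j, Cov i j * x j
          = ∑ i : Fin n, ∑ j : Fin n, x i * (Cov i j * x j) := by
            refine Finset.sum_congr rfl fun i _ => ?_
            rw [Finset.mul_sum]
        _ = ∑ i : Fin n, ∑ j : Fin n, (1/(n:ℝ)) * ∫ u in Ioc (0:ℝ) (n:ℝ),
              (x i * F (u - (i:ℕ))) * (x j * F (u - (j:ℕ))) :=
            Finset.sum_congr rfl fun i _ => Finset.sum_congr rfl fun j _ => hterm i j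
        _ = (1/(n:ℝ)) * ∑ i : Fin n, ∑ j : Fin n, ∫ u in Ioc (0:ℝ) (n:ℝ),
              (x i * F (u - (i:ℕ))) * (x j * F (u - (j:ℕ))) := by
            rw [Finset.mul_sum]
            refine Finset.sum_congr rfl fun i _ => ?_
            rw [Finset.mul_sum]
        _ = (1/(n:ℝ)) * ∫ u in Ioc (0:ℝ) (n:ℝ), G u ^ 2 := by
            congr 1
            calc ∑ i : Fin n, ∑ j : Fin n, ∫ u in Ioc (0:ℝ) (n:ℝ),
                  (x i * F (u - (i:ℕ))) * (x j * F (u - (j:ℕ)))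
                = ∑ i : Fin n, ∫ u in Ioc (0:ℝ) (n:ℝ), ∑ j : Fin n,
                    (x i * F (u - (i:ℕ))) * (x j * F (u - (j:ℕ))) :=
                  Finset.sum_congr rfl fun i _ =>
                    (integral_finset_sum Finset.univ fun j _ => hgint i j).symm
              _ = ∫ u in Ioc (0:ℝ) (n:ℝ), ∑ i : Fin n, ∑ j : Fin n,
                    (x i * F (u - (i:ℕ))) * (x j * F (u - (j:ℕ))) :=
                  (integral_finset_sum Finset.univ fun i _ =>
                    integrable_finset_sum Finset.univ fun j _ => hgint i j).symm
              _ = ∫ u in Ioc (0:ℝ) (n:ℝ), G u ^ 2 :=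
                  integral_congr_ae (Filter.Eventually.of_forall fun u => (hGsq u).symm)
    -- find a point mass near 0
    have hex : ∃ k : ℕ, μ (Ici ((1:ℝ)/(k+1))) ≠ 0 := by
      by_contra hcon
      push_neg at hcon
      have hsub : Ioo (0:ℝ) 1 ⊆ ⋃ k : ℕ, Ici ((1:ℝ)/(k+1)) := by
        intro s hs
        obtain ⟨k, hk⟩ := exists_nat_one_div_lt hs.1
        exact Set.mem_iUnion.mpr ⟨k, le_of_lt hk⟩
      have h0 : μ (Ioo (0:ℝ) 1) = 0 :=
        le_antisymm (le_trans (measure_mono hsub)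
          (le_of_eq (measure_iUnion_null hcon))) zero_le
      exact absurd h0 hμ.ne'
    obtain ⟨k, hk⟩ := hex
    set v : ℝ := 1/(k+1) with hvdef
    have hv0 : 0 < v := by rw [hvdef]; positivity
    have hv1 : v ≤ 1 := by
      rw [hvdef, div_le_one (by positivity)]
      linarith [Nat.cast_nonneg (α := ℝ) k]
    have hc : 0 < F v := by
      simp only [hFdef]
      exact ENNReal.toReal_pos hk (measure_ne_top μ _)
    have hxs : (Finset.univ.filter fun i : Fin n => x i ≠ 0).Nonempty := by
      obtain ⟨i, hi⟩ := Function.ne_iff.mp hx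
      exact ⟨i, Finset.mem_filter.mpr ⟨Finset.mem_univ _, hi⟩⟩
    set i₀ := (Finset.univ.filter fun i : Fin n => x i ≠ 0).max' hxs with hi₀def
    have hxi₀ : x i₀ ≠ 0 :=
      (Finset.mem_filter.mp ((Finset.univ.filter fun i : Fin n => x i ≠ 0).max'_mem hxs)).2
    have hmaxp : ∀ j : Fin n, x j ≠ 0 → j ≤ i₀ := fun j hj =>
      Finset.le_max' _ j (Finset.mem_filter.mpr ⟨Finset.mem_univ _, hj⟩)
    have hi₀n : ((i₀:ℕ):ℝ) + v ≤ (n:ℝ) := by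
      have h1 : ((i₀:ℕ):ℝ) + 1 ≤ (n:ℝ) := by exact_mod_cast i₀.isLt
      linarith
    have hGval : ∀ u : ℝ, u ∈ Ioc ((i₀:ℕ):ℝ) (((i₀:ℕ):ℝ) + v) →
        G u = x i₀ * F (u - (i₀:ℕ)) := by
      intro u hu
      simp only [hGdef]
      refine Finset.sum_eq_single i₀ ?_ (fun h => absurd (Finset.mem_univ i₀) h)
      intro j _ hj
      rcases lt_or_gt_of_ne hj with hlt | hgt
      · have hj1 : ((j:ℕ):ℝ) + 1 ≤ ((i₀:ℕ):ℝ) := by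
          exact_mod_cast Nat.succ_le_of_lt hlt
        have h1u : (1:ℝ) < u - (j:ℕ) := by linarith [hu.1]
        rw [hFzero _ h1u, mul_zero]
      · have hxj : x j = 0 := by
          by_contra hxj
          exact absurd (hmaxp j hxj) (not_le.mpr hgt)
        rw [hxj, zero_mul]
    have hlow : ∀ u ∈ Ioc ((i₀:ℕ):ℝ) (((i₀:ℕ):ℝ) + v),
        (x i₀ * F v) ^ 2 ≤ G u ^ 2 := by
      intro u hu
      rw [hGval u hu]
      have hFlow : (μ (Ici v)).toReal ≤ F (u - (i₀:ℕ)) := hFanti (by linarith [hu.2])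
      have h1 : |x i₀ * (μ (Ici v)).toReal| ≤ |x i₀ * F (u - (i₀:ℕ))| := by
        rw [abs_mul, abs_mul, abs_of_nonneg ENNReal.toReal_nonneg,
          abs_of_nonneg (hFnonneg _)]
        exact mul_le_mul_of_nonneg_left hFlow (abs_nonneg _)
      calc (x i₀ * F v) ^ 2
          = |x i₀ * (μ (Ici v)).toReal| ^ 2 := (sq_abs _).symm
        _ ≤ |x i₀ * F (u - (i₀:ℕ))| ^ 2 := pow_le_pow_left₀ (abs_nonneg _) h1 2
        _ = (x i₀ * F (u - (i₀:ℕ))) ^ 2 := sq_abs _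
    have hGsqint : IntegrableOn (fun u => G u ^ 2) (Ioc (0:ℝ) (n:ℝ)) volume := by
      have h1 : IntegrableOn (fun u => ∑ i : Fin n, ∑ j : Fin n,
          (x i * F (u - (i:ℕ))) * (x j * F (u - (j:ℕ)))) (Ioc (0:ℝ) (n:ℝ)) volume :=
        integrable_finset_sum _ fun i _ => integrable_finset_sum _ fun j _ => hgint i j
      exact h1.congr (Filter.Eventually.of_forall fun u => (hGsq u).symm)
    have hsubset : Ioc ((i₀:ℕ):ℝ) (((i₀:ℕ):ℝ) + v) ⊆ Ioc (0:ℝ) (n:ℝ) :=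
      Ioc_subset_Ioc (Nat.cast_nonneg _) hi₀n
    have hpos2 : 0 < ∫ u in Ioc (0:ℝ) (n:ℝ), G u ^ 2 := by
      have hlow2 : (x i₀ * F v) ^ 2
            * (volume (Ioc ((i₀:ℕ):ℝ) (((i₀:ℕ):ℝ) + v))).toReal
          ≤ ∫ u in Ioc ((i₀:ℕ):ℝ) (((i₀:ℕ):ℝ) + v), G u ^ 2 :=
        by
          have := setIntegral_ge_of_const_le measurableSet_Ioc
            (by rw [Real.volume_Ioc]; exact ENNReal.ofReal_ne_top) hlow
            (hGsqint.mono_set hsubset)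
          rw [smul_eq_mul, mul_comm] at this
          exact this
      have hvol : (volume (Ioc ((i₀:ℕ):ℝ) (((i₀:ℕ):ℝ) + v))).toReal = v := by
        rw [Real.volume_Ioc, add_sub_cancel_left, ENNReal.toReal_ofReal hv0.le]
      have hmono : ∫ u in Ioc ((i₀:ℕ):ℝ) (((i₀:ℕ):ℝ) + v), G u ^ 2
          ≤ ∫ u in Ioc (0:ℝ) (n:ℝ), G u ^ 2 :=
        setIntegral_mono_set hGsqint (Filter.Eventually.of_forall fun u => sq_nonneg _)
          (HasSubset.Subset.eventuallyLE hsubset)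
      have hbase : x i₀ * F v ≠ 0 := mul_ne_zero hxi₀ (ne_of_gt hc)
      have hc0 : 0 < (x i₀ * F v) ^ 2 * v :=
        mul_pos ((sq_nonneg _).lt_of_ne (Ne.symm (pow_ne_zero 2 hbase))) hv0
      calc (0:ℝ) < (x i₀ * F v) ^ 2 * v := hc0
        _ = (x i₀ * F v) ^ 2
              * (volume (Ioc ((i₀:ℕ):ℝ) (((i₀:ℕ):ℝ) + v))).toReal := by rw [hvol]
        _ ≤ ∫ u in Ioc ((i₀:ℕ):ℝ) (((i₀:ℕ):ℝ) + v), G u ^ 2 := hlow2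
        _ ≤ ∫ u in Ioc (0:ℝ) (n:ℝ), G u ^ 2 := hmono
    rw [hQ]
    exact mul_pos (by positivity) hpos2
  exact ⟨hfirst, hPD, hPD.det_pos.ne'.isUnit⟩
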